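/- Fix an integer k ≥ 1 and CDFs F_[1],…,F_[k] with F = (1/k) Σ_{r=1}^{k} F_[r]. Let {X_[r]j : r = 1,…,k; j ∈ ℕ} be mutually independent random variables with X_[r]j having CDF F_[r] for every j, and let F_RSS,m(t) = (1/(mk)) Σ_{r=1}^{k} Σ_{j=1}^{m} 1{X_[r]j ≤ t} be the RSS empirical distribution function. Then almost surely sup_{t ∈ ℝ} |F_RSS,m(t) − F(t)| → 0 as m → ∞. -/

import Mathlib

open MeasureTheory ProbabilityTheory Filter Finset

private lemma gc_step (F G : ℝ → ℝ) (Fm Gm : ℕ → ℝ → ℝ)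
    (hFmono : Monotone F)
    (hF0 : ∀ t, 0 ≤ F t) (hF1 : ∀ t, F t ≤ 1)
    (hFm0 : ∀ m t, 0 ≤ Fm m t) (hFm1 : ∀ m t, Fm m t ≤ 1)
    (hFmmono : ∀ m, Monotone (Fm m))
    (hle : ∀ s t : ℝ, s < t → F s ≤ G t)
    (hlem : ∀ m, ∀ s t : ℝ, s < t → Fm m s ≤ Gm m t)
    (htop : Tendsto F atTop (nhds 1)) (hbot : Tendsto F atBot (nhds 0))
    (hright : ∀ x : ℝ, ContinuousWithinAt F (Set.Ici x) x)
    (hGsup : ∀ t p : ℝ, (∀ s, s < t → F s ≤ p) → G t ≤ p)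
    (hconv : ∀ q : ℚ,
      Tendsto (fun m => Fm m (sInf {x | (q:ℝ) ≤ F x})) atTop (nhds (F (sInf {x | (q:ℝ) ≤ F x}))) ∧
      Tendsto (fun m => Gm m (sInf {x | (q:ℝ) ≤ F x})) atTop (nhds (G (sInf {x | (q:ℝ) ≤ F x})))) :
    Tendsto (fun m => ⨆ t : ℝ, |Fm m t - F t|) atTop (nhds 0) := by
  have hSne : ∀ p : ℝ, p < 1 → {x | p ≤ F x}.Nonempty := fun p hp1 =>
    (htop.eventually (eventually_ge_nhds hp1)).exists
  have hSbdd : ∀ p : ℝ, 0 < p → BddBelow {x | p ≤ F x} := by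
    intro p hp0
    obtain ⟨x₀, hx₀⟩ := (hbot.eventually (eventually_lt_nhds hp0)).exists
    refine ⟨x₀, fun y hy => ?_⟩
    by_contra hxy
    exact absurd (le_trans hy (hFmono (le_of_not_ge hxy))) (not_le.2 hx₀)
  have hQ : ∀ p : ℝ, 0 < p → p < 1 →
      p ≤ F (sInf {x | p ≤ F x}) ∧ ∀ s, s < sInf {x | p ≤ F x} → F s < p := by
    intro p hp0 hp1
    constructor
    · have hmem : ∀ x ∈ Set.Ioi (sInf {x | p ≤ F x}), p ≤ F x := by
        intro x hx
        obtain ⟨y, hyS, hyx⟩ := exists_lt_of_csInf_lt (hSne p hp1) hx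
        exact le_trans hyS (hFmono hyx.le)
      have htd : Tendsto F (nhdsWithin (sInf {x | p ≤ F x}) (Set.Ioi (sInf {x | p ≤ F x})))
          (nhds (F (sInf {x | p ≤ F x}))) :=
        (hright _).mono_left (nhdsWithin_mono _ Set.Ioi_subset_Ici_self)
      exact ge_of_tendsto htd (Filter.eventually_of_mem self_mem_nhdsWithin hmem)
    · intro s hs
      by_contra h
      exact absurd (csInf_le (hSbdd p hp0) (le_of_not_gt h)) (not_le.2 hs)
  have key : ∀ ε : ℝ, 0 < ε → ∀ᶠ m in atTop, ∀ t : ℝ, |Fm m t - F t| ≤ ε := by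
    intro ε hε
    obtain ⟨n0, hn0⟩ := exists_nat_one_div_lt (half_pos hε)
    set n : ℕ := n0 + 1 with hn
    set c : ℝ := 1 / ((n : ℝ) + 1) with hc
    have hc0 : 0 < c := by positivity
    have hcε : c < ε / 2 := by
      refine lt_of_le_of_lt ?_ hn0
      rw [hc, hn]
      apply one_div_le_one_div_of_le <;> push_cast <;> linarith
    set pR : ℕ → ℝ := fun i => (i : ℝ) / ((n : ℝ) + 1) with hpR
    set qQ : ℕ → ℚ := fun i => (i : ℚ) / ((n : ℚ) + 1) with hqQ
    have hcast : ∀ i : ℕ, ((qQ i : ℚ) : ℝ) = pR i := by intro i; rw [hqQ, hpR]; push_cast; rfl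
    set T : ℕ → ℝ := fun i => sInf {x | pR i ≤ F x} with hT
    have hTq : ∀ i : ℕ, sInf {x | ((qQ i : ℚ) : ℝ) ≤ F x} = T i := by
      intro i; rw [hT]; simp only [hcast]
    have hn1 : (1:ℝ) ≤ (n:ℝ) := by
      have h : 1 ≤ n := by omega
      exact_mod_cast h
    have hpRbounds : ∀ i : ℕ, 1 ≤ i → i ≤ n → 0 < pR i ∧ pR i < 1 := by
      intro i h1 h2
      have hi1 : (1:ℝ) ≤ (i:ℝ) := by exact_mod_cast h1
      have hin : (i:ℝ) ≤ (n:ℝ) := by exact_mod_cast h2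
      constructor
      · rw [hpR]; apply div_pos <;> linarith
      · rw [hpR, div_lt_one (by linarith)]; linarith
    have hQi : ∀ i : ℕ, 1 ≤ i → i ≤ n →
        pR i ≤ F (T i) ∧ ∀ s, s < T i → F s < pR i := by
      intro i h1 h2
      obtain ⟨hp0, hp1⟩ := hpRbounds i h1 h2
      exact hQ (pR i) hp0 hp1
    have hGTi : ∀ i : ℕ, 1 ≤ i → i ≤ n → G (T i) ≤ pR i := by
      intro i h1 h2
      exact hGsup (T i) (pR i) (fun s hs => ((hQi i h1 h2).2 s hs).le)
    have hev : ∀ᶠ m in atTop, ∀ i ∈ Finset.Icc 1 n,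
        |Fm m (T i) - F (T i)| < ε/2 ∧ |Gm m (T i) - G (T i)| < ε/2 := by
      rw [Filter.eventually_all_finset]
      intro i _
      have h1 : Tendsto (fun m => Fm m (T i)) atTop (nhds (F (T i))) := by
        have := (hconv (qQ i)).1; rwa [hTq] at this
      have h2 : Tendsto (fun m => Gm m (T i)) atTop (nhds (G (T i))) := by
        have := (hconv (qQ i)).2; rwa [hTq] at this
      exact (h1.eventually (eventually_abs_sub_lt _ (half_pos hε))).and
        (h2.eventually (eventually_abs_sub_lt _ (half_pos hε)))
    filter_upwards [hev] with m hm t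
    have h1n : (1:ℕ) ∈ Finset.Icc 1 n := by simp [Finset.mem_Icc]; omega
    have hnn : n ∈ Finset.Icc 1 n := by simp [Finset.mem_Icc]; omega
    have hpR1 : pR 1 = c := by rw [hpR, hc]; norm_num
    have hpRn : pR n = 1 - c := by
      rw [hpR, hc]; field_simp; ring
    rcases lt_or_ge t (T 1) with hcase | hcase1
    · -- t < T 1
      have hFt : F t ≤ pR 1 := le_trans (hle t (T 1) hcase) (hGTi 1 (le_refl 1) (by omega))
      have hGm1 := (hm 1 h1n).2
      rw [abs_sub_lt_iff] at hGm1
      have hFmt : Fm m t ≤ pR 1 + ε/2 := by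
        have := hlem m t (T 1) hcase
        have h2 := hGTi 1 (le_refl 1) (by omega)
        linarith [hGm1.1]
      rw [abs_sub_le_iff]
      constructor <;> nlinarith [hF0 t, hFm0 m t, hpR1, hcε]
    rcases le_or_gt (T n) t with hcase2 | hcase2
    · -- T n ≤ t
      have hFt : pR n ≤ F t := le_trans (hQi n (by omega) le_rfl).1 (hFmono hcase2)
      have hFmn := (hm n hnn).1
      rw [abs_sub_lt_iff] at hFmn
      have hFmt : pR n - ε/2 ≤ Fm m t := by
        have := hFmmono m hcase2
        have h2 := (hQi n (by omega) le_rfl).1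
        linarith [hFmn.2]
      rw [abs_sub_le_iff]
      constructor <;> nlinarith [hF1 t, hFm1 m t, hpRn, hcε]
    · -- T 1 ≤ t < T n
      set A : Finset ℕ := (Finset.Icc 1 n).filter (fun i => T i ≤ t) with hA
      have hAne : A.Nonempty := ⟨1, by
        rw [hA, Finset.mem_filter]
        exact ⟨h1n, hcase1⟩⟩
      set i := A.max' hAne with hi
      have hiA : i ∈ A := A.max'_mem hAne
      rw [hA, Finset.mem_filter, Finset.mem_Icc] at hiA
      obtain ⟨⟨hi1, hin⟩, hTi⟩ := hiA
      have hilt : i < n := by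
        rcases eq_or_lt_of_le hin with h | h
        · exfalso; rw [h] at hTi; exact absurd hTi (not_le.2 hcase2)
        · exact h
      have hnext : t < T (i+1) := by
        by_contra h
        have hmem : i + 1 ∈ A := by
          rw [hA, Finset.mem_filter, Finset.mem_Icc]
          exact ⟨⟨by omega, by omega⟩, le_of_not_gt h⟩
        have := A.le_max' _ hmem
        omega
      have e1 := (hm i (by simp [Finset.mem_Icc]; omega)).1
      have e2 := (hm (i+1) (by simp [Finset.mem_Icc]; omega)).2
      rw [abs_sub_lt_iff] at e1 e2
      have hFup : F t ≤ pR (i+1) :=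
        le_trans (hle t (T (i+1)) hnext) (hGTi (i+1) (by omega) (by omega))
      have hFlo : pR i ≤ F t := le_trans (hQi i hi1 hin).1 (hFmono hTi)
      have hFmup : Fm m t ≤ pR (i+1) + ε/2 := by
        have h3 := hlem m t (T (i+1)) hnext
        have h4 := hGTi (i+1) (by omega) (by omega)
        linarith [e2.1]
      have hFmlo : pR i - ε/2 ≤ Fm m t := by
        have h3 := hFmmono m hTi
        have h4 := (hQi i hi1 hin).1
        linarith [e1.2]
      have hdiff : pR (i+1) - pR i = c := by
        rw [hpR, hc]
        push_cast
        field_simp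
        ring
      rw [abs_sub_le_iff]
      constructor <;> linarith
  rw [Metric.tendsto_atTop]
  intro ε hε
  obtain ⟨N, hN⟩ := eventually_atTop.1 (key (ε/2) (half_pos hε))
  refine ⟨N, fun m hm => ?_⟩
  have h1 : (⨆ t : ℝ, |Fm m t - F t|) ≤ ε/2 :=
    Real.iSup_le (fun t => hN m hm t) (le_of_lt (half_pos hε))
  have h2 : 0 ≤ ⨆ t : ℝ, |Fm m t - F t| := Real.iSup_nonneg (fun t => abs_nonneg _)
  rw [Real.dist_eq, sub_zero, abs_of_nonneg h2]
  linarith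


private lemma indicator_slln
    {Ω : Type*} [MeasurableSpace Ω] (μ : Measure Ω) [IsProbabilityMeasure μ]
    (k : ℕ) (X : Fin k → ℕ → Ω → ℝ) (hXmeas : ∀ r j, Measurable (X r j))
    (hindep : iIndepFun (fun p : Fin k × ℕ => X p.1 p.2) μ)
    (hident : ∀ r j, IdentDistrib (X r j) (X r 0) μ μ)
    (s : Set ℝ) (hs : MeasurableSet s) (r : Fin k) :
    ∀ᵐ ω ∂μ, Tendsto (fun m => (∑ j ∈ Finset.range m,
      Set.indicator s (fun _ => (1:ℝ)) (X r j ω)) / m) atTop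
      (nhds ((μ {ω | X r 0 ω ∈ s}).toReal)) := by
  set φ : ℝ → ℝ := Set.indicator s (fun _ => 1) with hφ
  have hφm : Measurable φ := measurable_const.indicator hs
  set Y : ℕ → Ω → ℝ := fun j => φ ∘ X r j with hY
  have hYint : Integrable (Y 0) μ := by
    refine (integrable_const (1:ℝ)).mono' (hφm.comp (hXmeas r 0)).aestronglyMeasurable ?_
    filter_upwards with ω
    by_cases h : X r 0 ω ∈ s <;> simp [hY, hφ, Set.indicator_apply, h]
  have hYindep : Pairwise (Function.onFun (IndepFun · · μ) Y) := by
    intro a b hab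
    exact (hindep.indepFun (show ((r,a) : Fin k × ℕ) ≠ (r,b) by simp [hab])).comp hφm hφm
  have hYident : ∀ j, IdentDistrib (Y j) (Y 0) μ μ := fun j => (hident r j).comp hφm
  have hmean : μ[Y 0] = (μ {ω | X r 0 ω ∈ s}).toReal := by
    have hYeq : Y 0 = Set.indicator (X r 0 ⁻¹' s) (fun _ => (1:ℝ)) := by
      funext ω; by_cases h : X r 0 ω ∈ s <;> simp [hY, hφ, Set.indicator_apply, h]
    rw [hYeq, integral_indicator_const (1:ℝ) ((hXmeas r 0) hs)]
    simp [Set.preimage, measureReal_def]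
  have hsl := strong_law_ae_real Y hYint hYindep hYident
  rw [hmean] at hsl
  exact hsl

/-- Fix an integer `k ≥ 1` and CDFs `F_[1], …, F_[k]` with
`F = (1/k) ∑_{r=1}^{k} F_[r]`.  Let `{X_[r]j : r = 1, …, k; j ∈ ℕ}` be mutually
independent random variables with `X_[r]j` having CDF `F_[r]` for every `j`, and let
`F_RSS,m t = (1/(mk)) ∑_{r=1}^{k} ∑_{j=1}^{m} 1{X_[r]j ≤ t}` be the RSS empirical
distribution function.  Then almost surely
`sup_{t ∈ ℝ} |F_RSS,m t - F t| → 0` as `m → ∞`. -/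
theorem rss_glivenko_cantelli
    {Ω : Type*} [MeasurableSpace Ω] (μ : Measure Ω) [IsProbabilityMeasure μ]
    (k : ℕ) (hk : 1 ≤ k)
    (X : Fin k → ℕ → Ω → ℝ) (hXmeas : ∀ r j, Measurable (X r j))
    (hindep : iIndepFun (fun p : Fin k × ℕ => X p.1 p.2) μ)
    (Fr : Fin k → ℝ → ℝ) (hFr : ∀ r j x, Fr r x = (μ {ω | X r j ω ≤ x}).toReal)
    (F : ℝ → ℝ) (hF : ∀ x, F x = (1 / (k : ℝ)) * ∑ r, Fr r x)
    (FRSS : ℕ → ℝ → Ω → ℝ)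
    (hFRSS : ∀ m t ω, FRSS m t ω =
      (1 / ((m : ℝ) * k)) * ∑ r, ∑ j ∈ Finset.range m, (if X r j ω ≤ t then (1 : ℝ) else 0)) :
    ∀ᵐ ω ∂ μ, Tendsto (fun m => ⨆ t : ℝ, |FRSS m t ω - F t|) atTop (nhds 0) := by
  have hkpos : (0:ℝ) < k := by exact_mod_cast hk
  have hk0 : (k:ℝ) ≠ 0 := ne_of_gt hkpos
  -- identical distributions within each row
  have hmap : ∀ r j, Measure.map (X r j) μ = Measure.map (X r 0) μ := by
    intro r j
    have h1 : IsProbabilityMeasure (Measure.map (X r j) μ) :=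
      Measure.isProbabilityMeasure_map (hXmeas r j).aemeasurable
    have h2 : IsProbabilityMeasure (Measure.map (X r 0) μ) :=
      Measure.isProbabilityMeasure_map (hXmeas r 0).aemeasurable
    refine Measure.ext_of_Iic _ _ (fun a => ?_)
    rw [Measure.map_apply (hXmeas r j) measurableSet_Iic,
      Measure.map_apply (hXmeas r 0) measurableSet_Iic]
    have heq : (μ {ω | X r j ω ≤ a}).toReal = (μ {ω | X r 0 ω ≤ a}).toReal :=
      (hFr r j a).symm.trans (hFr r 0 a)
    exact (ENNReal.toReal_eq_toReal_iff' (measure_ne_top μ _) (measure_ne_top μ _)).1 heq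
  have hident : ∀ r j, IdentDistrib (X r j) (X r 0) μ μ :=
    fun r j => ⟨(hXmeas r j).aemeasurable, (hXmeas r 0).aemeasurable, hmap r j⟩
  -- cdf representation
  set ν : Fin k → Measure ℝ := fun r => Measure.map (X r 0) μ with hν
  haveI : ∀ r, IsProbabilityMeasure (ν r) :=
    fun r => Measure.isProbabilityMeasure_map (hXmeas r 0).aemeasurable
  have hpre : ∀ r (x : ℝ), ν r (Set.Iic x) = μ {ω | X r 0 ω ≤ x} := by
    intro r x
    rw [hν, Measure.map_apply (hXmeas r 0) measurableSet_Iic]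
    rfl
  have hFeq : F = fun x => (1/(k:ℝ)) * ∑ r, cdf (ν r) x := by
    funext x
    rw [hF x]
    congr 1
    refine Finset.sum_congr rfl fun r _ => ?_
    rw [hFr r 0 x, cdf_eq_real, measureReal_def, hpre]
  have hFmono : Monotone F := by
    rw [hFeq]
    intro a b hab
    exact mul_le_mul_of_nonneg_left
      (Finset.sum_le_sum fun r _ => monotone_cdf (ν r) hab) (by positivity)
  have hF0' : ∀ t, 0 ≤ F t := by
    intro t; rw [hFeq]
    exact mul_nonneg (by positivity) (Finset.sum_nonneg fun r _ => cdf_nonneg (ν r) t)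
  have hsum1 : (1/(k:ℝ)) * ∑ _r : Fin k, (1:ℝ) = 1 := by
    simp only [Finset.sum_const, Finset.card_univ, Fintype.card_fin, nsmul_eq_mul, mul_one]
    field_simp
  have hF1' : ∀ t, F t ≤ 1 := by
    intro t; rw [hFeq]
    calc (1/(k:ℝ)) * ∑ r, cdf (ν r) t
        ≤ (1/(k:ℝ)) * ∑ _r : Fin k, (1:ℝ) :=
          mul_le_mul_of_nonneg_left (Finset.sum_le_sum fun r _ => cdf_le_one (ν r) t)
            (by positivity)
      _ = 1 := hsum1
  have htop : Tendsto F atTop (nhds 1) := by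
    rw [hFeq]
    have := (tendsto_finset_sum Finset.univ
      (fun (r : Fin k) _ => tendsto_cdf_atTop (ν r))).const_mul (1/(k:ℝ))
    rwa [hsum1] at this
  have hbot : Tendsto F atBot (nhds 0) := by
    rw [hFeq]
    have := (tendsto_finset_sum Finset.univ
      (fun (r : Fin k) _ => tendsto_cdf_atBot (ν r))).const_mul (1/(k:ℝ))
    simpa using this
  have hright : ∀ x : ℝ, ContinuousWithinAt F (Set.Ici x) x := by
    intro x
    rw [hFeq]
    exact ((tendsto_finset_sum Finset.univ
      (fun (r : Fin k) _ => (cdf (ν r)).right_continuous x)).const_mul (1/(k:ℝ)))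
  have hFalt : ∀ t, F t = (1/(k:ℝ)) * ∑ r, (μ {ω | X r 0 ω ≤ t}).toReal := by
    intro t
    rw [hF t]
    congr 1
    exact Finset.sum_congr rfl fun r _ => hFr r 0 t
  have hle : ∀ s t : ℝ, s < t →
      F s ≤ (1/(k:ℝ)) * ∑ r, (μ {ω | X r 0 ω < t}).toReal := by
    intro s t hst
    rw [hFalt]
    refine mul_le_mul_of_nonneg_left (Finset.sum_le_sum fun r _ => ?_) (by positivity)
    exact ENNReal.toReal_mono (measure_ne_top μ _)
      (measure_mono fun ω h => lt_of_le_of_lt h hst)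
  have hGsup : ∀ t p : ℝ, (∀ s, s < t → F s ≤ p) →
      (1/(k:ℝ)) * ∑ r, (μ {ω | X r 0 ω < t}).toReal ≤ p := by
    intro t p hp
    have hstep : ∀ i : ℕ, (0:ℝ) < 1/((i:ℝ)+1) := by intro i; positivity
    have htd : Tendsto (fun i : ℕ => F (t - 1/((i:ℝ)+1))) atTop
        (nhds ((1/(k:ℝ)) * ∑ r, (μ {ω | X r 0 ω < t}).toReal)) := by
      have hper : ∀ r : Fin k, Tendsto (fun i : ℕ => (μ {ω | X r 0 ω ≤ t - 1/((i:ℝ)+1)}).toReal)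
          atTop (nhds ((μ {ω | X r 0 ω < t}).toReal)) := by
        intro r
        have hmono : Monotone (fun i : ℕ => {ω | X r 0 ω ≤ t - 1/((i:ℝ)+1)}) := by
          intro i j hij ω hω
          simp only [Set.mem_setOf_eq] at hω ⊢
          have h1 : (1:ℝ)/((j:ℝ)+1) ≤ 1/((i:ℝ)+1) := by
            apply one_div_le_one_div_of_le
            · positivity
            · have : (i:ℝ) ≤ (j:ℝ) := by exact_mod_cast hij
              linarith
          linarith
        have hu : (⋃ i : ℕ, {ω | X r 0 ω ≤ t - 1/((i:ℝ)+1)}) = {ω | X r 0 ω < t} := by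
          ext ω
          simp only [Set.mem_iUnion, Set.mem_setOf_eq]
          constructor
          · rintro ⟨i, hi⟩
            exact lt_of_le_of_lt hi (by linarith [hstep i])
          · intro h
            obtain ⟨i, hi⟩ := exists_nat_one_div_lt (sub_pos.2 h)
            exact ⟨i, by linarith⟩
        have htend := tendsto_measure_iUnion_atTop (μ := μ) hmono
        rw [hu] at htend
        exact (ENNReal.tendsto_toReal (measure_ne_top μ _)).comp htend
      have h2 := (tendsto_finset_sum Finset.univ
        (fun (r : Fin k) _ => hper r)).const_mul (1/(k:ℝ))
      refine Tendsto.congr (fun i => ?_) h2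
      exact (hFalt _).symm
    exact le_of_tendsto htd (Filter.Eventually.of_forall fun i => hp _ (by linarith [hstep i]))
  -- bounds on the empirical cdf, for every ω
  have hFm0 : ∀ ω m t, 0 ≤ FRSS m t ω := by
    intro ω m t
    rw [hFRSS]
    refine mul_nonneg (by positivity) (Finset.sum_nonneg fun r _ =>
      Finset.sum_nonneg fun j _ => ?_)
    split <;> norm_num
  have hFm1 : ∀ ω m t, FRSS m t ω ≤ 1 := by
    intro ω m t
    rcases Nat.eq_zero_or_pos m with hm | hm
    · subst hm; rw [hFRSS]; simp
    · rw [hFRSS]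
      have hmk : (0:ℝ) < (m:ℝ)*k := mul_pos (by exact_mod_cast hm) hkpos
      have hS : ∑ r, ∑ j ∈ Finset.range m, (if X r j ω ≤ t then (1:ℝ) else 0) ≤ (m:ℝ)*k := by
        calc ∑ r, ∑ j ∈ Finset.range m, (if X r j ω ≤ t then (1:ℝ) else 0)
            ≤ ∑ _r : Fin k, (m:ℝ) := Finset.sum_le_sum fun r _ => by
              calc ∑ j ∈ Finset.range m, (if X r j ω ≤ t then (1:ℝ) else 0)
                  ≤ ∑ _j ∈ Finset.range m, (1:ℝ) :=
                    Finset.sum_le_sum fun j _ => by split <;> norm_num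
                _ = (m:ℝ) := by simp
          _ = (m:ℝ)*k := by simp [Finset.sum_const, Finset.card_univ, mul_comm]
      calc (1/((m:ℝ)*k)) * ∑ r, ∑ j ∈ Finset.range m, (if X r j ω ≤ t then (1:ℝ) else 0)
          ≤ (1/((m:ℝ)*k)) * ((m:ℝ)*k) := mul_le_mul_of_nonneg_left hS (by positivity)
        _ = 1 := one_div_mul_cancel hmk.ne'
  have hFmmono : ∀ ω m, Monotone (fun t => FRSS m t ω) := by
    intro ω m s t hst
    simp only [hFRSS]
    refine mul_le_mul_of_nonneg_left (Finset.sum_le_sum fun r _ =>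
      Finset.sum_le_sum fun j _ => ?_) (by positivity)
    by_cases h1 : X r j ω ≤ s
    · rw [if_pos h1, if_pos (h1.trans hst)]
    · rw [if_neg h1]; split <;> norm_num
  -- rewriting the empirical cdf in indicator/average form
  have hFReq : ∀ ω m (t : ℝ), (1/(k:ℝ)) * ∑ r, (∑ j ∈ Finset.range m,
      Set.indicator (Set.Iic t) (fun _ => (1:ℝ)) (X r j ω))/(m:ℝ) = FRSS m t ω := by
    intro ω m t
    rw [hFRSS, Finset.mul_sum, Finset.mul_sum]
    refine Finset.sum_congr rfl fun r _ => ?_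
    rw [one_div_mul_eq_div, one_div_mul_eq_div, div_div]
    have hjeq : ∀ j : ℕ, Set.indicator (Set.Iic t) (fun _ => (1:ℝ)) (X r j ω)
        = if X r j ω ≤ t then (1:ℝ) else 0 := fun j => by
      by_cases h : X r j ω ≤ t <;> simp [Set.indicator_apply, h]
    simp only [hjeq]
  have hlem : ∀ ω m, ∀ s t : ℝ, s < t → FRSS m s ω ≤ (1/(k:ℝ)) * ∑ r,
      (∑ j ∈ Finset.range m, Set.indicator (Set.Iio t) (fun _ => (1:ℝ)) (X r j ω))/(m:ℝ) := by
    intro ω m s t hst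
    rw [← hFReq ω m s]
    refine mul_le_mul_of_nonneg_left (Finset.sum_le_sum fun r _ => ?_) (by positivity)
    rw [div_eq_mul_inv, div_eq_mul_inv]
    refine mul_le_mul_of_nonneg_right (Finset.sum_le_sum fun j _ => ?_) (by positivity)
    simp only [Set.indicator_apply, Set.mem_Iic, Set.mem_Iio]
    by_cases h1 : X r j ω ≤ s
    · rw [if_pos h1, if_pos (lt_of_le_of_lt h1 hst)]
    · rw [if_neg h1]; split <;> norm_num
  -- pointwise a.s. convergence at a fixed point
  have hpt : ∀ t : ℝ, ∀ᵐ ω ∂μ, Tendsto (fun m => FRSS m t ω) atTop (nhds (F t)) ∧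
      Tendsto (fun m => (1/(k:ℝ)) * ∑ r, (∑ j ∈ Finset.range m,
          Set.indicator (Set.Iio t) (fun _ => (1:ℝ)) (X r j ω))/(m:ℝ)) atTop
        (nhds ((1/(k:ℝ)) * ∑ r, (μ {ω' | X r 0 ω' < t}).toReal)) := by
    intro t
    have A : ∀ᵐ ω ∂μ, ∀ r : Fin k, Tendsto (fun m => (∑ j ∈ Finset.range m,
        Set.indicator (Set.Iic t) (fun _ => (1:ℝ)) (X r j ω)) / (m:ℝ)) atTop
        (nhds ((μ {ω | X r 0 ω ∈ Set.Iic t}).toReal)) :=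
      ae_all_iff.2 fun r => indicator_slln μ k X hXmeas hindep hident _ measurableSet_Iic r
    have B : ∀ᵐ ω ∂μ, ∀ r : Fin k, Tendsto (fun m => (∑ j ∈ Finset.range m,
        Set.indicator (Set.Iio t) (fun _ => (1:ℝ)) (X r j ω)) / (m:ℝ)) atTop
        (nhds ((μ {ω | X r 0 ω ∈ Set.Iio t}).toReal)) :=
      ae_all_iff.2 fun r => indicator_slln μ k X hXmeas hindep hident _ measurableSet_Iio r
    simp only [Set.mem_Iic] at A
    simp only [Set.mem_Iio] at B
    filter_upwards [A, B] with ω hA hB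
    constructor
    · have h1 := (tendsto_finset_sum Finset.univ (fun (r : Fin k) _ => hA r)).const_mul (1/(k:ℝ))
      rw [hFalt t]
      exact Tendsto.congr (fun m => hFReq ω m t) h1
    · exact (tendsto_finset_sum Finset.univ (fun (r : Fin k) _ => hB r)).const_mul (1/(k:ℝ))
  have hae : ∀ᵐ ω ∂μ, ∀ q : ℚ,
      Tendsto (fun m => FRSS m (sInf {x | (q:ℝ) ≤ F x}) ω) atTop
        (nhds (F (sInf {x | (q:ℝ) ≤ F x}))) ∧
      Tendsto (fun m => (1/(k:ℝ)) * ∑ r, (∑ j ∈ Finset.range m,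
          Set.indicator (Set.Iio (sInf {x | (q:ℝ) ≤ F x})) (fun _ => (1:ℝ)) (X r j ω))/(m:ℝ))
        atTop (nhds ((1/(k:ℝ)) * ∑ r, (μ {ω' | X r 0 ω' < sInf {x | (q:ℝ) ≤ F x}}).toReal)) :=
    ae_all_iff.2 fun q => hpt _
  filter_upwards [hae] with ω hω
  exact gc_step F (fun t => (1/(k:ℝ)) * ∑ r, (μ {ω' | X r 0 ω' < t}).toReal)
    (fun m t => FRSS m t ω)
    (fun m t => (1/(k:ℝ)) * ∑ r, (∑ j ∈ Finset.range m,
      Set.indicator (Set.Iio t) (fun _ => (1:ℝ)) (X r j ω))/(m:ℝ))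
    hFmono hF0' hF1' (fun m t => hFm0 ω m t) (fun m t => hFm1 ω m t) (fun m => hFmmono ω m)
    hle (fun m => hlem ω m) htop hbot hright hGsup (fun q => hω q)
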